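/- arXiv:1203.4188 — 2 statements merged into one kernel-verified Lean document; each statement's English description precedes it below -/
import Mathlib

section
/- Let n ≥ 2r and let ℬ ⊆ [n]^(r) be a maximal left-compressed intersecting family. Then ℬ ∩ [2r]^(r) is a maximal left-compressed intersecting subfamily of [2r]^(r). -/
open Finset

/-- The ij-compression of a finite set: replace j by i if possible. -/
def comp (i j : ℕ) (A : Finset ℕ) : Finset ℕ :=
  if j ∈ A ∧ i ∉ A then insert i (A.erase j) else A

/-- The ij-compression of a family of sets. -/
def compFam (i j : ℕ) (𝒜 : Finset (Finset ℕ)) : Finset (Finset ℕ) :=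
  (𝒜.filter (fun A => comp i j A ∈ 𝒜)) ∪
    ((𝒜.filter (fun A => comp i j A ∉ 𝒜)).image (comp i j))

/-- A family is intersecting if any two members meet. -/
def IsIntersecting (𝒜 : Finset (Finset ℕ)) : Prop :=
  ∀ A ∈ 𝒜, ∀ B ∈ 𝒜, (A ∩ B).Nonempty

/-- A family is left-compressed if it is invariant under all ij-compressions, i < j. -/
def LeftCompressed (𝒜 : Finset (Finset ℕ)) : Prop :=
  ∀ i j : ℕ, 1 ≤ i → i < j → compFam i j 𝒜 = 𝒜

/-- The compression order: same size and the k-th smallest element of `A` is at most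
the k-th smallest element of `B`. -/
def domLE (A B : Finset ℕ) : Prop :=
  A.card = B.card ∧ ∀ (k : ℕ) (a b : ℕ), (A.sort (· ≤ ·))[k]? = some a →
    (B.sort (· ≤ ·))[k]? = some b → a ≤ b

/-- `A ≺ G` : `A` is generated by `G`, i.e. `|G| ≤ |A|` and the k-th smallest element
of `A` is at most the k-th smallest element of `G` for `k ≤ |G|`. -/
def prec (A G : Finset ℕ) : Prop :=
  G.card ≤ A.card ∧ ∀ (k : ℕ) (a g : ℕ), (A.sort (· ≤ ·))[k]? = some a →
    (G.sort (· ≤ ·))[k]? = some g → a ≤ g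

/-- The r-element subsets of [n] = {1, ..., n}. -/
def uniformOn (n r : ℕ) : Finset (Finset ℕ) := (Icc 1 n).powersetCard r

/-- The family ⟨𝒢⟩_r^n generated by 𝒢 under inclusion. -/
def genSub (r n : ℕ) (𝒢 : Finset (Finset ℕ)) : Finset (Finset ℕ) :=
  (uniformOn n r).filter (fun A => ∃ G ∈ 𝒢, G ⊆ A)

open Classical in
/-- The family ⟨𝒢⟩_r^n generated by 𝒢 under ≺. -/
noncomputable def genP (r n : ℕ) (𝒢 : Finset (Finset ℕ)) : Finset (Finset ℕ) :=
  (uniformOn n r).filter (fun A => ∃ G ∈ 𝒢, prec A G)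

/-- ℱ(X) : the members of ℱ meeting X. -/
def hitting (ℱ : Finset (Finset ℕ)) (X : Finset ℕ) : Finset (Finset ℕ) :=
  ℱ.filter (fun A => (A ∩ X).Nonempty)

/-- The star at 1 in [n]^(r). -/
def star (n r : ℕ) : Finset (Finset ℕ) := (uniformOn n r).filter (fun A => 1 ∈ A)

/-- A maximal left-compressed intersecting subfamily of [n]^(r). -/
def MaxLCI (n r : ℕ) (𝒜 : Finset (Finset ℕ)) : Prop :=
  𝒜 ⊆ uniformOn n r ∧ LeftCompressed 𝒜 ∧ IsIntersecting 𝒜 ∧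
    ∀ B ∈ uniformOn n r, B ∉ 𝒜 → ¬ IsIntersecting (insert B 𝒜)

/-- X is good for n and r. -/
def IsGood (n r : ℕ) (X : Finset ℕ) : Prop :=
  ∀ 𝒜 ⊆ uniformOn n r, LeftCompressed 𝒜 → IsIntersecting 𝒜 →
    (hitting 𝒜 X).card ≤ (hitting (star n r) X).card

-- closure lemmas
lemma leftCompressed_mem {𝒜 : Finset (Finset ℕ)} (h : LeftCompressed 𝒜) {i j : ℕ}
    {A : Finset ℕ} (hi : 1 ≤ i) (hij : i < j) (hA : A ∈ 𝒜) : comp i j A ∈ 𝒜 := by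
  by_cases hc : comp i j A ∈ 𝒜
  · exact hc
  · have : comp i j A ∈ compFam i j 𝒜 := by
      apply mem_union_right
      exact mem_image_of_mem _ (mem_filter.2 ⟨hA, hc⟩)
    rw [h i j hi hij] at this
    exact this

lemma leftCompressed_of_closed {𝒜 : Finset (Finset ℕ)}
    (h : ∀ i j : ℕ, 1 ≤ i → i < j → ∀ A ∈ 𝒜, comp i j A ∈ 𝒜) : LeftCompressed 𝒜 := by
  intro i j hi hij
  unfold compFam
  have h1 : 𝒜.filter (fun A => comp i j A ∈ 𝒜) = 𝒜 :=
    filter_eq_self.2 (fun A hA => h i j hi hij A hA)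
  have h2 : 𝒜.filter (fun A => comp i j A ∉ 𝒜) = ∅ :=
    filter_eq_empty_iff.2 (fun {A} hA hc => hc (h i j hi hij A hA))
  rw [h1, h2, image_empty, union_empty]

lemma comp_mem_uniformOn {m r i j : ℕ} {A : Finset ℕ} (hi : 1 ≤ i) (hij : i < j)
    (hA : A ∈ uniformOn m r) : comp i j A ∈ uniformOn m r := by
  rw [uniformOn, mem_powersetCard] at hA ⊢
  unfold comp
  split_ifs with hc
  · obtain ⟨hjA, hiA⟩ := hc
    constructor
    · intro x hx
      rcases mem_insert.1 hx with rfl | hx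
      · have hj : j ∈ Icc 1 m := hA.1 hjA
        rw [mem_Icc] at hj ⊢
        exact ⟨hi, le_trans (le_of_lt hij) hj.2⟩
      · exact hA.1 (erase_subset _ _ hx)
    · rw [card_insert_of_notMem (fun h => hiA (erase_subset _ _ h)),
        card_erase_of_mem hjA]
      have : 1 ≤ A.card := card_pos.2 ⟨j, hjA⟩
      omega
  · exact hA

-- splitting at first difference
lemma split_first_diff : ∀ {l m : List ℕ}, List.Forall₂ (· ≤ ·) l m → l ≠ m →
    ∃ p i t' j t, l = p ++ i :: t' ∧ m = p ++ j :: t ∧ i < j ∧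
      List.Forall₂ (· ≤ ·) t' t := by
  intro l m h
  induction h with
  | nil => simp
  | @cons a b l m hab h ih =>
    intro hne
    by_cases hab' : a = b
    · subst hab'
      have hne' : l ≠ m := fun h' => hne (by rw [h'])
      obtain ⟨p, i, t', j, t, h1, h2, h3, h4⟩ := ih hne'
      exact ⟨a :: p, i, t', j, t, by rw [h1]; rfl, by rw [h2]; rfl, h3, h4⟩
    · exact ⟨[], a, l, b, m, rfl, rfl, lt_of_le_of_ne hab hab', h⟩

lemma sort_replace (A : Finset ℕ) (p t : List ℕ) (i j : ℕ)
    (hA : A.sort (· ≤ ·) = p ++ j :: t) (hij : i < j) (hp : ∀ x ∈ p, x < i)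
    (hiA : i ∉ A) :
    (insert i (A.erase j)).sort (· ≤ ·) = p ++ i :: t := by
  have hs : List.Pairwise (· < ·) (p ++ j :: t) := hA ▸ A.sortedLT_sort.pairwise
  rw [List.pairwise_append] at hs
  obtain ⟨hsp, hsjt, hcross⟩ := hs
  have hjt : ∀ x ∈ t, j < x := fun x hx => List.rel_of_pairwise_cons hsjt hx
  have hLs : List.Pairwise (· < ·) (p ++ i :: t) := by
    rw [List.pairwise_append]
    refine ⟨hsp, ?_, ?_⟩
    · exact List.Pairwise.cons (fun x hx => lt_trans hij (hjt x hx))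
        (List.Pairwise.sublist (List.sublist_cons_self j t) hsjt)
    · intro a ha b hb
      rcases List.mem_cons.1 hb with rfl | hb
      · exact hp a ha
      · exact hcross a ha b (List.mem_cons_of_mem _ hb)
  have hmemA : ∀ x, x ∈ A ↔ x ∈ p ∨ x = j ∨ x ∈ t := by
    intro x
    rw [← Finset.mem_sort (α := ℕ) (· ≤ ·), hA]
    simp [List.mem_append]
  apply List.Perm.eq_of_pairwise' (Finset.pairwise_sort _ _) (hLs.imp le_of_lt) ?_
  apply List.perm_of_nodup_nodup_toFinset_eq (Finset.sort_nodup _ _) hLs.nodup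
  rw [Finset.sort_toFinset]
  ext x
  simp only [List.mem_toFinset, List.mem_append, List.mem_cons, Finset.mem_insert,
    Finset.mem_erase]
  constructor
  · rintro (rfl | ⟨hxj, hxA⟩)
    · exact Or.inr (Or.inl rfl)
    · rcases (hmemA x).1 hxA with hx | rfl | hx
      · exact Or.inl hx
      · exact absurd rfl hxj
      · exact Or.inr (Or.inr hx)
  · rintro (hx | rfl | hx)
    · exact Or.inr ⟨ne_of_lt (lt_trans (hp x hx) hij), (hmemA x).2 (Or.inl hx)⟩
    · exact Or.inl rfl
    · exact Or.inr ⟨ne_of_gt (hjt x hx), (hmemA x).2 (Or.inr (Or.inr hx))⟩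

lemma dom_mem (ℬ : Finset (Finset ℕ))
    (hLC : ∀ i j A, 1 ≤ i → i < j → A ∈ ℬ → comp i j A ∈ ℬ) :
    ∀ s : ℕ, ∀ A B : Finset ℕ, A.sum id = s → A ∈ ℬ → (∀ x ∈ B, 1 ≤ x) →
      List.Forall₂ (· ≤ ·) (B.sort (· ≤ ·)) (A.sort (· ≤ ·)) → B ∈ ℬ := by
  intro s
  induction s using Nat.strong_induction_on with
  | _ s ih =>
    intro A B hsum hA h1 hdom
    by_cases hBA : B.sort (· ≤ ·) = A.sort (· ≤ ·)
    · have : B = A := by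
        rw [← Finset.sort_toFinset B (· ≤ ·), ← Finset.sort_toFinset A (· ≤ ·), hBA]
      exact this ▸ hA
    obtain ⟨p, i, t', j, t, hB, hA', hij, hdt⟩ := split_first_diff hdom hBA
    have hsB : List.Pairwise (· < ·) (p ++ i :: t') := hB ▸ B.sortedLT_sort.pairwise
    have hsA : List.Pairwise (· < ·) (p ++ j :: t) := hA' ▸ A.sortedLT_sort.pairwise
    rw [List.pairwise_append] at hsB hsA
    have hp : ∀ x ∈ p, x < i := fun x hx => hsB.2.2 x hx i (List.mem_cons_self)
    have hjA : j ∈ A := by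
      rw [← Finset.mem_sort (α := ℕ) (· ≤ ·), hA']; simp
    have hiA : i ∉ A := by
      intro hi
      rw [← Finset.mem_sort (α := ℕ) (· ≤ ·), hA'] at hi
      rcases List.mem_append.1 hi with hi | hi
      · exact absurd (hp i hi) (lt_irrefl i)
      · rcases List.mem_cons.1 hi with rfl | hi
        · exact lt_irrefl i hij
        · exact lt_irrefl i (lt_trans hij (List.rel_of_pairwise_cons hsA.2.1 hi))
    have hiB : i ∈ B := by
      rw [← Finset.mem_sort (α := ℕ) (· ≤ ·), hB]; simp
    have hi1 : 1 ≤ i := h1 i hiB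
    have hcomp : comp i j A = insert i (A.erase j) := by
      unfold comp; rw [if_pos ⟨hjA, hiA⟩]
    have hA2 : insert i (A.erase j) ∈ ℬ := hcomp ▸ hLC i j A hi1 hij hA
    have hsort2 : (insert i (A.erase j)).sort (· ≤ ·) = p ++ i :: t :=
      sort_replace A p t i j hA' hij hp hiA
    have hsum2 : (insert i (A.erase j)).sum id < s := by
      have h1' : (insert i (A.erase j)).sum id = i + (A.erase j).sum id :=
        Finset.sum_insert (fun h => hiA (erase_subset _ _ h))
      have h2' : (A.erase j).sum id + j = A.sum id := Finset.sum_erase_add A id hjA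
      omega
    refine ih _ hsum2 _ B rfl hA2 h1 ?_
    rw [hB, hsort2]
    exact List.rel_append (List.forall₂_same.2 (fun x _ => le_refl x))
      (List.Forall₂.cons (le_refl i) hdt)

lemma forall₂_of_initial : ∀ (l m : List ℕ), List.Pairwise (· < ·) l →
    List.Pairwise (· < ·) m → l.length = m.length →
    (∀ y ∈ m, y ∉ l → ∀ x ∈ l, x ≤ y) → List.Forall₂ (· ≤ ·) l m := by
  intro l
  induction l with
  | nil => intro m _ _ hlen _; rw [List.length_nil] at hlen
           rw [List.eq_nil_of_length_eq_zero hlen.symm]; exact List.Forall₂.nil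
  | cons a l ihl =>
    intro m hsl hsm hlen hhyp
    cases m with
    | nil => simp at hlen
    | cons b m =>
      have hab : a ≤ b := by
        by_contra hba
        push_neg at hba
        have hbnl : b ∉ a :: l := by
          intro hb
          rcases List.mem_cons.1 hb with rfl | hb
          · exact lt_irrefl b hba
          · exact lt_irrefl b (lt_trans hba (List.rel_of_pairwise_cons hsl hb))
        exact absurd (hhyp b (List.mem_cons_self) hbnl a (List.mem_cons_self))
          (not_le.2 hba)
      refine List.Forall₂.cons hab (ihl m hsl.of_cons hsm.of_cons (by simpa using hlen) ?_)
      intro y hy hynl x hx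
      have hya : a < y := lt_of_le_of_lt hab (List.rel_of_pairwise_cons hsm hy)
      have hynl' : y ∉ a :: l := by
        intro h
        rcases List.mem_cons.1 h with rfl | h
        · exact lt_irrefl y hya
        · exact hynl h
      exact hhyp y (List.mem_cons_of_mem _ hy) hynl' x (List.mem_cons_of_mem _ hx)

theorem stmt7 (n r : ℕ) (hn : 2 * r ≤ n) (ℬ : Finset (Finset ℕ))
    (hℬ : MaxLCI n r ℬ) : MaxLCI (2 * r) r (ℬ ∩ uniformOn (2 * r) r) := by
  obtain ⟨hsub, hLC, hInt, hMax⟩ := hℬ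
  have hclosed : ∀ i j A, 1 ≤ i → i < j → A ∈ ℬ → comp i j A ∈ ℬ :=
    fun i j A hi hij hA => leftCompressed_mem hLC hi hij hA
  have hkey : ∀ A0 ∈ ℬ, ∀ B ∈ uniformOn (2 * r) r, A0 ∩ B = ∅ →
      ¬ IsIntersecting (insert B (ℬ ∩ uniformOn (2 * r) r)) := by
    intro A0 hA0 B hB hdisj hint
    obtain ⟨hBsub, hBcard⟩ := Finset.mem_powersetCard.1 hB
    obtain ⟨hA0sub, hA0card⟩ := Finset.mem_powersetCard.1 (hsub hA0)
    set C := Icc 1 (2 * r) \ B with hC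
    have hCcard : C.card = r := by
      rw [hC, card_sdiff_of_subset hBsub, Nat.card_Icc]; omega
    have hC1 : ∀ x ∈ C, 1 ≤ x := fun x hx => (mem_Icc.1 (mem_sdiff.1 hx).1).1
    have hhyp : ∀ y ∈ A0.sort (· ≤ ·), y ∉ C.sort (· ≤ ·) →
        ∀ x ∈ C.sort (· ≤ ·), x ≤ y := by
      intro y hy hyn x hx
      rw [Finset.mem_sort] at hy hx
      have hyn' : y ∉ C := fun h => hyn ((Finset.mem_sort _).2 h)
      have hyB : y ∉ B := by
        intro h
        have : y ∈ A0 ∩ B := mem_inter.2 ⟨hy, h⟩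
        rw [hdisj] at this
        exact absurd this (notMem_empty y)
      have hy1 : 1 ≤ y := (mem_Icc.1 (hA0sub hy)).1
      have hy2r : 2 * r < y := by
        by_contra hle
        push_neg at hle
        exact hyn' (mem_sdiff.2 ⟨mem_Icc.2 ⟨hy1, hle⟩, hyB⟩)
      have hx2r : x ≤ 2 * r := (mem_Icc.1 (mem_sdiff.1 hx).1).2
      omega
    have hdom := forall₂_of_initial _ _ (C.sortedLT_sort.pairwise) (A0.sortedLT_sort.pairwise)
      (by rw [Finset.length_sort, Finset.length_sort, hCcard, hA0card]) hhyp
    have hCB : C ∈ ℬ := dom_mem ℬ hclosed (A0.sum id) A0 C rfl hA0 hC1 hdom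
    have hCu : C ∈ uniformOn (2 * r) r :=
      Finset.mem_powersetCard.2 ⟨sdiff_subset, hCcard⟩
    have hne := hint C (mem_insert_of_mem (mem_inter.2 ⟨hCB, hCu⟩)) B
      (mem_insert_self _ _)
    rw [hC, Finset.sdiff_inter_self] at hne
    exact absurd hne (by simp)
  refine ⟨inter_subset_right, ?_, ?_, ?_⟩
  · apply leftCompressed_of_closed
    intro i j hi hij A hA
    rw [mem_inter] at hA ⊢
    exact ⟨hclosed i j A hi hij hA.1, comp_mem_uniformOn hi hij hA.2⟩
  · intro A hA B hB
    exact hInt A (mem_inter.1 hA).1 B (mem_inter.1 hB).1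
  · intro B hB hBnot hint
    have hBn : B ∈ uniformOn n r := by
      obtain ⟨h1, h2⟩ := Finset.mem_powersetCard.1 hB
      exact Finset.mem_powersetCard.2
        ⟨h1.trans (Icc_subset_Icc_right hn), h2⟩
    have hBB : B ∉ ℬ := fun h => hBnot (mem_inter.2 ⟨h, hB⟩)
    have hni := hMax B hBn hBB
    unfold IsIntersecting at hni
    push_neg at hni
    obtain ⟨X, hX, Y, hY, hXY⟩ := hni
    rcases mem_insert.1 hX with rfl | hXB
    · rcases mem_insert.1 hY with rfl | hYB
      · have h2 := hint _ (mem_insert_self _ _) _ (mem_insert_self _ _)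
        rw [hXY] at h2
        exact absurd h2 (by simp)
      · exact hkey Y hYB X hB (by rw [inter_comm, hXY]) hint
    · rcases mem_insert.1 hY with rfl | hYB
      · exact hkey X hXB Y hB hXY hint
      · exact absurd (hInt X hXB Y hYB) (by rw [hXY]; simp)
end

section
/- Let r ≥ 2 and n ≥ 2r. If X ⊆ [2,n] satisfies |X| > r, then X is good: every left-compressed intersecting family 𝒜 ⊆ [n]^(r) satisfies |𝒜(X)| ≤ |𝒮(X)|, where 𝒮 is the star at 1. -/
open Finset

/-! ### Auxiliary lemmas -/

lemma comp_of_cond {i j : ℕ} {A : Finset ℕ} (h : j ∈ A) (h' : i ∉ A) :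
    comp i j A = insert i (A.erase j) := if_pos ⟨h, h'⟩

lemma comp_mem_of_leftCompressed {𝒜 : Finset (Finset ℕ)} (h : LeftCompressed 𝒜)
    {i j : ℕ} (hi : 1 ≤ i) (hij : i < j) {A : Finset ℕ} (hA : A ∈ 𝒜) : comp i j A ∈ 𝒜 := by
  by_contra hc
  have hmem : comp i j A ∈ compFam i j 𝒜 :=
    mem_union_right _ (mem_image_of_mem _ (mem_filter.2 ⟨hA, hc⟩))
  rw [h i j hi hij] at hmem
  exact hc hmem

lemma mem_uniformOn {n r : ℕ} {A : Finset ℕ} :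
    A ∈ uniformOn n r ↔ A ⊆ Icc 1 n ∧ A.card = r := mem_powersetCard

lemma mem_hitting {ℱ : Finset (Finset ℕ)} {X A : Finset ℕ} :
    A ∈ hitting ℱ X ↔ A ∈ ℱ ∧ (A ∩ X).Nonempty := mem_filter

/-- The key swap lemma. -/
lemma hitting_swap_le (ℱ : Finset (Finset ℕ)) (Z : Finset ℕ) (x y : ℕ)
    (hx : x ∈ Z) (hy : y ∉ Z)
    (hcl : ∀ A ∈ ℱ, y ∈ A → x ∉ A → insert x (A.erase y) ∈ ℱ) :
    (hitting ℱ (insert y (Z.erase x))).card ≤ (hitting ℱ Z).card := by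
  set Z' := insert y (Z.erase x) with hZ'def
  have hxy : x ≠ y := fun h => hy (h ▸ hx)
  have hxZ' : x ∉ Z' := by
    simp only [hZ'def, mem_insert, mem_erase]
    push_neg
    exact ⟨hxy, fun h _ => h rfl⟩
  have hmain : ∀ A ∈ hitting ℱ Z' \ hitting ℱ Z,
      A ∈ ℱ ∧ y ∈ A ∧ x ∉ A ∧ A ∩ Z = ∅ := by
    intro A hA
    obtain ⟨hA1, hA2⟩ := mem_sdiff.1 hA
    obtain ⟨hAF, hne⟩ := mem_hitting.1 hA1
    have hAZ : A ∩ Z = ∅ := by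
      by_contra h
      exact hA2 (mem_hitting.2 ⟨hAF, nonempty_iff_ne_empty.2 h⟩)
    have hyA : y ∈ A := by
      obtain ⟨a, ha⟩ := hne
      obtain ⟨haA, haZ'⟩ := mem_inter.1 ha
      rcases mem_insert.1 haZ' with h | h
      · exact h ▸ haA
      · exact absurd (mem_inter.2 ⟨haA, mem_of_mem_erase h⟩) (by simp [hAZ])
    have hxA : x ∉ A := fun h => by
      have : x ∈ A ∩ Z := mem_inter.2 ⟨h, hx⟩
      simp [hAZ] at this
    exact ⟨hAF, hyA, hxA, hAZ⟩
  have himg : ∀ A ∈ hitting ℱ Z' \ hitting ℱ Z,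
      insert x (A.erase y) ∈ hitting ℱ Z \ hitting ℱ Z' := by
    intro A hA
    obtain ⟨hAF, hyA, hxA, hAZ⟩ := hmain A hA
    have hBF : insert x (A.erase y) ∈ ℱ := hcl A hAF hyA hxA
    have hBZ : (insert x (A.erase y) ∩ Z).Nonempty :=
      ⟨x, mem_inter.2 ⟨mem_insert_self _ _, hx⟩⟩
    have hBZ' : insert x (A.erase y) ∩ Z' = ∅ := by
      rw [eq_empty_iff_forall_notMem]
      intro b hb
      obtain ⟨hb1, hb2⟩ := mem_inter.1 hb
      rcases mem_insert.1 hb1 with h | h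
      · exact hxZ' (h ▸ hb2)
      · have hbne : b ≠ y := (mem_erase.1 h).1
        have hbA : b ∈ A := mem_of_mem_erase h
        have hbZ : b ∈ Z := by
          rcases mem_insert.1 hb2 with h' | h'
          · exact absurd h' hbne
          · exact mem_of_mem_erase h'
        have : b ∈ A ∩ Z := mem_inter.2 ⟨hbA, hbZ⟩
        simp [hAZ] at this
    refine mem_sdiff.2 ⟨mem_hitting.2 ⟨hBF, hBZ⟩, fun h => ?_⟩
    have := (mem_hitting.1 h).2
    rw [hBZ'] at this
    exact not_nonempty_empty this
  have hinj : Set.InjOn (fun A : Finset ℕ => insert x (A.erase y)) ↑(hitting ℱ Z' \ hitting ℱ Z) := by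
    intro A hA B hB h
    rw [mem_coe] at hA hB
    obtain ⟨_, hyA, hxA, _⟩ := hmain A hA
    obtain ⟨_, hyB, hxB, _⟩ := hmain B hB
    have hxA' : x ∉ A.erase y := fun h' => hxA (mem_of_mem_erase h')
    have hxB' : x ∉ B.erase y := fun h' => hxB (mem_of_mem_erase h')
    simp only at h
    have : A.erase y = B.erase y := by
      have := congrArg (fun s => Finset.erase s x) h
      simpa [erase_insert hxA', erase_insert hxB'] using this
    rw [← insert_erase hyA, this, insert_erase hyB]
  have hcard1 : (hitting ℱ Z' \ hitting ℱ Z).card ≤ (hitting ℱ Z \ hitting ℱ Z').card :=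
    card_le_card_of_injOn _ himg hinj
  have e1 : (hitting ℱ Z' ∩ hitting ℱ Z).card + (hitting ℱ Z' \ hitting ℱ Z).card
      = (hitting ℱ Z').card := card_inter_add_card_sdiff _ _
  have e2 : (hitting ℱ Z ∩ hitting ℱ Z').card + (hitting ℱ Z \ hitting ℱ Z').card
      = (hitting ℱ Z).card := card_inter_add_card_sdiff _ _
  rw [inter_comm] at e2
  omega

lemma card_filter_mem_eq_image (ℱ : Finset (Finset ℕ)) (n : ℕ) :
    (ℱ.filter (fun A => n ∈ A)).card
      = ((ℱ.filter (fun A => n ∈ A)).image (fun A => A.erase n)).card := by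
  rw [card_image_of_injOn]
  intro A hA B hB h
  rw [mem_coe, mem_filter] at hA hB
  simp only at h
  rw [← insert_erase hA.2, h, insert_erase hB.2]

lemma card_filter_split (ℱ : Finset (Finset ℕ)) (n : ℕ) :
    (ℱ.filter (fun A => n ∉ A)).card + (ℱ.filter (fun A => n ∈ A)).card = ℱ.card := by
  rw [add_comm]
  exact card_filter_add_card_filter_not (p := fun A => n ∈ A)

lemma card_split (ℱ : Finset (Finset ℕ)) (n : ℕ) :
    ℱ.card = (ℱ.filter (fun A => n ∉ A)).card
      + ((ℱ.filter (fun A => n ∈ A)).image (fun A => A.erase n)).card := by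
  rw [← card_filter_mem_eq_image, card_filter_split]

lemma hitting_split (ℱ : Finset (Finset ℕ)) (X : Finset ℕ) (n : ℕ) (hnX : n ∉ X) :
    (hitting ℱ X).card =
      (hitting (ℱ.filter (fun A => n ∉ A)) X).card +
      (hitting ((ℱ.filter (fun A => n ∈ A)).image (fun A => A.erase n)) X).card := by
  have h1 : hitting (ℱ.filter (fun A => n ∉ A)) X = (hitting ℱ X).filter (fun A => n ∉ A) := by
    ext A
    simp only [hitting, mem_filter]
    tauto
  have h2 : hitting ((ℱ.filter (fun A => n ∈ A)).image (fun A => A.erase n)) X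
      = ((hitting ℱ X).filter (fun A => n ∈ A)).image (fun A => A.erase n) := by
    ext B
    constructor
    · intro hB
      obtain ⟨hB1, hne⟩ := mem_hitting.1 hB
      obtain ⟨A, hA, rfl⟩ := mem_image.1 hB1
      obtain ⟨hAF, hnA⟩ := mem_filter.1 hA
      obtain ⟨a, ha⟩ := hne
      obtain ⟨ha1, ha2⟩ := mem_inter.1 ha
      refine mem_image.2 ⟨A, mem_filter.2 ⟨mem_hitting.2 ⟨hAF, ?_⟩, hnA⟩, rfl⟩
      exact ⟨a, mem_inter.2 ⟨mem_of_mem_erase ha1, ha2⟩⟩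
    · intro hB
      obtain ⟨A, hA, rfl⟩ := mem_image.1 hB
      obtain ⟨hAH, hnA⟩ := mem_filter.1 hA
      obtain ⟨hAF, ⟨a, ha⟩⟩ := mem_hitting.1 hAH
      obtain ⟨ha1, ha2⟩ := mem_inter.1 ha
      have hane : a ≠ n := fun h => hnX (h ▸ ha2)
      refine mem_hitting.2 ⟨mem_image.2 ⟨A, mem_filter.2 ⟨hAF, hnA⟩, rfl⟩, ?_⟩
      exact ⟨a, mem_inter.2 ⟨mem_erase.2 ⟨hane, ha1⟩, ha2⟩⟩
  rw [h1, h2, ← card_filter_mem_eq_image, card_filter_split]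

lemma mem_star {n r : ℕ} {A : Finset ℕ} :
    A ∈ star n r ↔ A ⊆ Icc 1 n ∧ A.card = r ∧ 1 ∈ A := by
  unfold _root_.star
  rw [mem_filter, mem_uniformOn]
  tauto

lemma star_filter_not_mem {n r : ℕ} (hn : 1 ≤ n) :
    (star n r).filter (fun A => n ∉ A) = star (n - 1) r := by
  ext A
  rw [mem_filter, mem_star, mem_star]
  constructor
  · rintro ⟨⟨hsub, hcard, h1⟩, hn'⟩
    refine ⟨fun a ha => ?_, hcard, h1⟩
    have := mem_Icc.1 (hsub ha)
    have hane : a ≠ n := fun h => hn' (h ▸ ha)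
    rw [mem_Icc]; omega
  · rintro ⟨hsub, hcard, h1⟩
    have hn' : n ∉ A := fun h => by
      have := mem_Icc.1 (hsub h); omega
    refine ⟨⟨fun a ha => ?_, hcard, h1⟩, hn'⟩
    have := mem_Icc.1 (hsub ha)
    rw [mem_Icc]; omega

lemma star_filter_mem_image {n r : ℕ} (hn : 2 ≤ n) (hr : 1 ≤ r) :
    ((star n r).filter (fun A => n ∈ A)).image (fun A => A.erase n) = star (n - 1) (r - 1) := by
  ext B
  constructor
  · intro hB
    obtain ⟨A, hA, rfl⟩ := mem_image.1 hB
    obtain ⟨hAs, hnA⟩ := mem_filter.1 hA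
    obtain ⟨hsub, hcard, h1⟩ := mem_star.1 hAs
    refine mem_star.2 ⟨fun a ha => ?_, by rw [card_erase_of_mem hnA, hcard],
      mem_erase.2 ⟨by omega, h1⟩⟩
    obtain ⟨hane, haA⟩ := mem_erase.1 ha
    have := mem_Icc.1 (hsub haA)
    rw [mem_Icc]; omega
  · intro hB
    obtain ⟨hsub, hcard, h1⟩ := mem_star.1 hB
    have hnB : n ∉ B := fun h => by have := mem_Icc.1 (hsub h); omega
    refine mem_image.2 ⟨insert n B, mem_filter.2 ⟨mem_star.2 ⟨fun a ha => ?_, ?_, ?_⟩,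
      mem_insert_self _ _⟩, erase_insert hnB⟩
    · rcases mem_insert.1 ha with h | h
      · rw [h, mem_Icc]; omega
      · have := mem_Icc.1 (hsub h); rw [mem_Icc]; omega
    · rw [card_insert_of_notMem hnB, hcard]; omega
    · exact mem_insert_of_mem h1

lemma filter_sub_uniformOn {n r : ℕ} {𝒜 : Finset (Finset ℕ)} (hn : 1 ≤ n)
    (hsub : 𝒜 ⊆ uniformOn n r) :
    𝒜.filter (fun A => n ∉ A) ⊆ uniformOn (n - 1) r := by
  intro A hA
  obtain ⟨hA1, hA2⟩ := mem_filter.1 hA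
  obtain ⟨hs, hc⟩ := mem_uniformOn.1 (hsub hA1)
  refine mem_uniformOn.2 ⟨fun a ha => ?_, hc⟩
  have := mem_Icc.1 (hs ha)
  have : a ≠ n := fun h => hA2 (h ▸ ha)
  rw [mem_Icc]; omega

lemma image_sub_uniformOn {n r : ℕ} {𝒜 : Finset (Finset ℕ)}
    (hsub : 𝒜 ⊆ uniformOn n r) :
    (𝒜.filter (fun A => n ∈ A)).image (fun A => A.erase n) ⊆ uniformOn (n - 1) (r - 1) := by
  intro B hB
  obtain ⟨A, hA, rfl⟩ := mem_image.1 hB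
  obtain ⟨hA1, hnA⟩ := mem_filter.1 hA
  obtain ⟨hs, hc⟩ := mem_uniformOn.1 (hsub hA1)
  refine mem_uniformOn.2 ⟨fun a ha => ?_, by rw [card_erase_of_mem hnA, hc]⟩
  obtain ⟨hane, haA⟩ := mem_erase.1 ha
  have := mem_Icc.1 (hs haA)
  rw [mem_Icc]; omega

lemma closed_filter {n r : ℕ} {𝒜 : Finset (Finset ℕ)}
    (hsub : 𝒜 ⊆ uniformOn n r)
    (hcl : ∀ i j, 1 ≤ i → i < j → ∀ A ∈ 𝒜, comp i j A ∈ 𝒜) :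
    ∀ i j, 1 ≤ i → i < j → ∀ A ∈ 𝒜.filter (fun A => n ∉ A),
      comp i j A ∈ 𝒜.filter (fun A => n ∉ A) := by
  intro i j hi hij A hA
  obtain ⟨hA1, hA2⟩ := mem_filter.1 hA
  by_cases hc : j ∈ A ∧ i ∉ A
  · obtain ⟨hs, _⟩ := mem_uniformOn.1 (hsub hA1)
    have hjn : j ≤ n := (mem_Icc.1 (hs hc.1)).2
    have hjne : j ≠ n := fun h => hA2 (h ▸ hc.1)
    have hin : i ≠ n := by omega
    refine mem_filter.2 ⟨hcl i j hi hij A hA1, ?_⟩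
    rw [comp_of_cond hc.1 hc.2]
    intro h
    rcases mem_insert.1 h with h | h
    · exact hin h.symm
    · exact hA2 (mem_of_mem_erase h)
  · rw [comp, if_neg hc]
    exact hA
lemma closed_image {n r : ℕ} {𝒜 : Finset (Finset ℕ)}
    (hsub : 𝒜 ⊆ uniformOn n r)
    (hcl : ∀ i j, 1 ≤ i → i < j → ∀ A ∈ 𝒜, comp i j A ∈ 𝒜) :
    ∀ i j, 1 ≤ i → i < j → ∀ B ∈ (𝒜.filter (fun A => n ∈ A)).image (fun A => A.erase n),
      comp i j B ∈ (𝒜.filter (fun A => n ∈ A)).image (fun A => A.erase n) := by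
  intro i j hi hij B hB
  obtain ⟨A, hA, rfl⟩ := mem_image.1 hB
  obtain ⟨hA1, hnA⟩ := mem_filter.1 hA
  by_cases hc : j ∈ A.erase n ∧ i ∉ A.erase n
  · obtain ⟨hjne, hjA⟩ := mem_erase.1 hc.1
    obtain ⟨hs, _⟩ := mem_uniformOn.1 (hsub hA1)
    have hjn : j ≤ n := (mem_Icc.1 (hs hjA)).2
    have hin : i ≠ n := by omega
    have hiA : i ∉ A := fun h => hc.2 (mem_erase.2 ⟨hin, h⟩)
    have hAcomp : comp i j A ∈ 𝒜 := hcl i j hi hij A hA1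
    rw [comp_of_cond hjA hiA] at hAcomp
    have hncomp : n ∈ insert i (A.erase j) :=
      mem_insert_of_mem (mem_erase.2 ⟨fun h => hjne h.symm, hnA⟩)
    refine mem_image.2 ⟨insert i (A.erase j), mem_filter.2 ⟨hAcomp, hncomp⟩, ?_⟩
    rw [comp_of_cond hc.1 hc.2]
    rw [erase_insert_of_ne hin]
    congr 1
    ext a
    simp only [mem_erase]
    tauto
  · rw [comp, if_neg hc]
    exact mem_image.2 ⟨A, hA, rfl⟩

lemma intersecting_filter {n : ℕ} {𝒜 : Finset (Finset ℕ)} (hint : IsIntersecting 𝒜) :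
    IsIntersecting (𝒜.filter (fun A => n ∉ A)) := by
  intro A hA B hB
  exact hint A (mem_filter.1 hA).1 B (mem_filter.1 hB).1

lemma intersecting_image {n r : ℕ} {𝒜 : Finset (Finset ℕ)}
    (hr : 1 ≤ r) (hn : 2 * r + 1 ≤ n)
    (hsub : 𝒜 ⊆ uniformOn n r)
    (hcl : ∀ i j, 1 ≤ i → i < j → ∀ A ∈ 𝒜, comp i j A ∈ 𝒜)
    (hint : IsIntersecting 𝒜) :
    IsIntersecting ((𝒜.filter (fun A => n ∈ A)).image (fun A => A.erase n)) := by
  intro A' hA' B' hB'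
  obtain ⟨A, hA, rfl⟩ := mem_image.1 hA'
  obtain ⟨B, hB, rfl⟩ := mem_image.1 hB'
  obtain ⟨hA1, hnA⟩ := mem_filter.1 hA
  obtain ⟨hB1, hnB⟩ := mem_filter.1 hB
  by_contra hne
  rw [not_nonempty_iff_eq_empty] at hne
  obtain ⟨hsA, hcA⟩ := mem_uniformOn.1 (hsub hA1)
  obtain ⟨hsB, hcB⟩ := mem_uniformOn.1 (hsub hB1)
  -- find c ∈ Icc 1 (n-1) outside A ∪ B
  have hcardAB : (A ∪ B).card ≤ 2 * r - 1 := by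
    have h1 : (A ∪ B).card + (A ∩ B).card = A.card + B.card := card_union_add_card_inter _ _
    have h2 : 1 ≤ (A ∩ B).card := card_pos.2 ⟨n, mem_inter.2 ⟨hnA, hnB⟩⟩
    omega
  have hS : (Icc 1 (n - 1) \ (A ∪ B)).Nonempty := by
    rw [← card_pos]
    have h1 : (Icc 1 (n - 1)).card - (A ∪ B).card ≤ (Icc 1 (n - 1) \ (A ∪ B)).card :=
      le_card_sdiff _ _
    rw [Nat.card_Icc] at h1
    omega
  obtain ⟨c, hc⟩ := hS
  obtain ⟨hcI, hcAB⟩ := mem_sdiff.1 hc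
  obtain ⟨hc1, hc2⟩ := mem_Icc.1 hcI
  have hcA' : c ∉ A := fun h => hcAB (mem_union_left _ h)
  have hcB' : c ∉ B := fun h => hcAB (mem_union_right _ h)
  have hcn : c < n := by omega
  have hcomp : comp c n A ∈ 𝒜 := hcl c n hc1 hcn A hA1
  rw [comp_of_cond hnA hcA'] at hcomp
  obtain ⟨d, hd⟩ := hint _ hcomp B hB1
  obtain ⟨hd1, hd2⟩ := mem_inter.1 hd
  rcases mem_insert.1 hd1 with h | h
  · exact hcB' (h ▸ hd2)
  · have hdn : d ≠ n := (mem_erase.1 h).1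
    have : d ∈ A.erase n ∩ B.erase n :=
      mem_inter.2 ⟨h, mem_erase.2 ⟨hdn, hd2⟩⟩
    rw [hne] at this
    exact notMem_empty _ this

lemma hitting_eq_self {ℱ : Finset (Finset ℕ)} {n r : ℕ} (hr : 2 ≤ r)
    (hsub : ℱ ⊆ uniformOn n r) : hitting ℱ (Icc 2 n) = ℱ := by
  apply filter_true_of_mem
  intro A hA
  obtain ⟨hs, hc⟩ := mem_uniformOn.1 (hsub hA)
  have h1 : 1 < A.card := by omega
  obtain ⟨a, ha, b, hb, hab⟩ := one_lt_card.1 h1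
  rcases eq_or_ne a 1 with h | h
  · have hb1 : b ≠ 1 := fun h' => hab (by rw [h, h'])
    have := mem_Icc.1 (hs hb)
    exact ⟨b, mem_inter.2 ⟨hb, mem_Icc.2 ⟨by omega, this.2⟩⟩⟩
  · have := mem_Icc.1 (hs ha)
    exact ⟨a, mem_inter.2 ⟨ha, mem_Icc.2 ⟨by omega, this.2⟩⟩⟩

lemma base_case {r : ℕ} (hr : 2 ≤ r) {𝒜 X : Finset _}
    (hsub : 𝒜 ⊆ uniformOn (2 * r) r) (hint : IsIntersecting 𝒜)
    (hX : X ⊆ Icc 2 (2 * r)) (hcard : r < X.card) :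
    (hitting 𝒜 X).card ≤ (hitting (star (2 * r) r) X).card := by
  set n := 2 * r with hn
  set T := hitting 𝒜 X with hT
  set T1 := T.filter (fun A => 1 ∈ A) with hT1
  set T2 := T.filter (fun A => 1 ∉ A) with hT2
  set φ := fun A : Finset ℕ => insert 1 (Icc 2 n \ A) with hφ
  have hT2fact : ∀ A ∈ T2, A ∈ 𝒜 ∧ (A ∩ X).Nonempty ∧ 1 ∉ A ∧ A ⊆ Icc 2 n := by
    intro A hA
    obtain ⟨hA1, hA2⟩ := mem_filter.1 hA
    obtain ⟨hAF, hne⟩ := mem_hitting.1 hA1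
    refine ⟨hAF, hne, hA2, fun a ha => ?_⟩
    obtain ⟨hs, _⟩ := mem_uniformOn.1 (hsub hAF)
    have := mem_Icc.1 (hs ha)
    have : a ≠ 1 := fun h => hA2 (h ▸ ha)
    rw [mem_Icc]; omega
  have hφprop : ∀ A ∈ T2, φ A ∈ hitting (star n r) X ∧ φ A ∉ 𝒜 := by
    intro A hA
    obtain ⟨hAF, hne, h1A, hA2n⟩ := hT2fact A hA
    obtain ⟨_, hcA⟩ := mem_uniformOn.1 (hsub hAF)
    have h1sd : (1 : ℕ) ∉ Icc 2 n \ A := by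
      intro h
      have := mem_Icc.1 (mem_sdiff.1 h).1
      omega
    have hcsd : (Icc 2 n \ A).card = r - 1 := by
      rw [card_sdiff_of_subset hA2n, Nat.card_Icc, hcA]
      omega
    have hφcard : (φ A).card = r := by
      rw [hφ]
      simp only
      rw [card_insert_of_notMem h1sd, hcsd]
      omega
    have hφsub : φ A ⊆ Icc 1 n := by
      intro a ha
      rcases mem_insert.1 ha with h | h
      · rw [h, mem_Icc]; omega
      · have := mem_Icc.1 (mem_sdiff.1 h).1
        rw [mem_Icc]; omega
    have hφstar : φ A ∈ star n r := mem_star.2 ⟨hφsub, hφcard, mem_insert_self _ _⟩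
    have hφmeet : (φ A ∩ X).Nonempty := by
      have hXA : ¬ X ⊆ A := fun h => by
        have := card_le_card h
        omega
      obtain ⟨x, hxX, hxA⟩ := not_subset.1 hXA
      refine ⟨x, mem_inter.2 ⟨?_, hxX⟩⟩
      exact mem_insert_of_mem (mem_sdiff.2 ⟨hX hxX, hxA⟩)
    have hφdisj : φ A ∩ A = ∅ := by
      rw [eq_empty_iff_forall_notMem]
      intro b hb
      obtain ⟨hb1, hb2⟩ := mem_inter.1 hb
      rcases mem_insert.1 hb1 with h | h
      · exact h1A (h ▸ hb2)
      · exact (mem_sdiff.1 h).2 hb2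
    have hφnotA : φ A ∉ 𝒜 := by
      intro h
      obtain ⟨b, hb⟩ := hint _ h A hAF
      rw [hφdisj] at hb
      exact notMem_empty _ hb
    exact ⟨mem_hitting.2 ⟨hφstar, hφmeet⟩, hφnotA⟩
  have hinj : Set.InjOn φ ↑T2 := by
    intro A hA B hB h
    rw [mem_coe] at hA hB
    have hA4 := (hT2fact A hA).2.2.2
    have hB4 := (hT2fact B hB).2.2.2
    have key : ∀ C : Finset ℕ, C ⊆ Icc 2 n → Icc 2 n \ ((φ C).erase 1) = C := by
      intro C hC
      have h1sd : (1 : ℕ) ∉ Icc 2 n \ C := by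
        intro h
        have := mem_Icc.1 (mem_sdiff.1 h).1
        omega
      rw [hφ]
      simp only
      rw [erase_insert h1sd, sdiff_sdiff_right_self, inf_eq_inter]
      exact inter_eq_right.2 hC
    rw [← key A hA4, ← key B hB4, h]
  have hdisj : Disjoint T1 (T2.image φ) := by
    rw [disjoint_right]
    intro B hB hB1
    obtain ⟨A, hA, rfl⟩ := mem_image.1 hB
    exact (hφprop A hA).2 (mem_hitting.1 (mem_filter.1 hB1).1).1
  have hsplit : T.card = T1.card + T2.card := by
    rw [hT1, hT2, add_comm]
    rw [add_comm]
    exact (card_filter_add_card_filter_not (p := fun A => 1 ∈ A)).symm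
  have himgcard : T2.card = (T2.image φ).card := (card_image_of_injOn hinj).symm
  have hunion : T1 ∪ T2.image φ ⊆ hitting (star n r) X := by
    intro B hB
    rcases mem_union.1 hB with h | h
    · obtain ⟨hB1, hB2⟩ := mem_filter.1 h
      obtain ⟨hBF, hne⟩ := mem_hitting.1 hB1
      obtain ⟨hs, hc⟩ := mem_uniformOn.1 (hsub hBF)
      exact mem_hitting.2 ⟨mem_star.2 ⟨hs, hc, hB2⟩, hne⟩
    · obtain ⟨A, hA, rfl⟩ := mem_image.1 h
      exact (hφprop A hA).1
  calc T.card = T1.card + (T2.image φ).card := by omega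
    _ = (T1 ∪ T2.image φ).card := (card_union_of_disjoint hdisj).symm
    _ ≤ (hitting (star n r) X).card := card_le_card hunion

lemma r_one_sub {n : ℕ} {𝒜 : Finset (Finset ℕ)} (hsub : 𝒜 ⊆ uniformOn n 1)
    (hcl : ∀ i j, 1 ≤ i → i < j → ∀ A ∈ 𝒜, comp i j A ∈ 𝒜)
    (hint : IsIntersecting 𝒜) : 𝒜 ⊆ {({1} : Finset ℕ)} := by
  intro A hA
  obtain ⟨hs, hc⟩ := mem_uniformOn.1 (hsub hA)
  obtain ⟨a, rfl⟩ := card_eq_one.1 hc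
  rcases eq_or_ne a 1 with h | h
  · rw [h]; exact mem_singleton_self _
  exfalso
  have ha1 : 1 ≤ a := (mem_Icc.1 (hs (mem_singleton_self a))).1
  have hlt : 1 < a := by omega
  have h1A : (1 : ℕ) ∉ ({a} : Finset ℕ) := by
    rw [mem_singleton]; omega
  have hcomp : comp 1 a {a} ∈ 𝒜 := hcl 1 a le_rfl hlt _ hA
  rw [comp_of_cond (mem_singleton_self a) h1A, erase_singleton, LawfulSingleton.insert_empty_eq] at hcomp
  obtain ⟨b, hb⟩ := hint _ hA _ hcomp
  obtain ⟨hb1, hb2⟩ := mem_inter.1 hb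
  rw [mem_singleton] at hb1 hb2
  omega

lemma one_mem_star {n : ℕ} (hn : 1 ≤ n) : ({1} : Finset ℕ) ∈ star n 1 := by
  refine mem_star.2 ⟨fun a ha => ?_, card_singleton _, mem_singleton_self _⟩
  rw [mem_singleton] at ha
  rw [ha, mem_Icc]; omega

lemma ekr : ∀ n r (𝒜 : Finset (Finset ℕ)), 1 ≤ r → 2 * r ≤ n → 𝒜 ⊆ uniformOn n r →
    (∀ i j, 1 ≤ i → i < j → ∀ A ∈ 𝒜, comp i j A ∈ 𝒜) → IsIntersecting 𝒜 →
    𝒜.card ≤ (star n r).card := by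
  intro n
  induction n using Nat.strong_induction_on with
  | _ n IH =>
    intro r 𝒜 hr hn hsub hcl hint
    rcases eq_or_lt_of_le hr with h1 | h1
    · -- r = 1
      have hsub1 : 𝒜 ⊆ {({1} : Finset ℕ)} := by
        rw [← h1] at hsub; exact r_one_sub hsub hcl hint
      calc 𝒜.card ≤ ({({1} : Finset ℕ)} : Finset _).card := card_le_card hsub1
        _ = 1 := card_singleton _
        _ ≤ (star n r).card := by
          rw [← h1]
          exact card_pos.2 ⟨{1}, one_mem_star (by omega)⟩
    · have hr2 : 2 ≤ r := h1
      rcases eq_or_lt_of_le hn with h2 | h2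
      · -- n = 2r
        subst h2
        have e1 := hitting_eq_self hr2 hsub
        have hstarsub : star (2*r) r ⊆ uniformOn (2*r) r := filter_subset _ _
        have e2 := hitting_eq_self hr2 hstarsub
        rw [← e1, ← e2]
        refine base_case hr2 hsub hint (Subset.refl _) ?_
        rw [Nat.card_Icc]; omega
      · -- n > 2r
        have hn1 : 1 ≤ n := by omega
        have h𝒜 := card_split 𝒜 n
        have hstar := card_split (star n r) n
        rw [star_filter_not_mem hn1, star_filter_mem_image (by omega) (by omega)] at hstar
        have hb1 : (𝒜.filter (fun A => n ∉ A)).card ≤ (star (n-1) r).card := by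
          refine IH (n-1) (by omega) r _ hr (by omega) (filter_sub_uniformOn hn1 hsub)
            (closed_filter hsub hcl) (intersecting_filter hint)
        have hb2 : ((𝒜.filter (fun A => n ∈ A)).image (fun A => A.erase n)).card
            ≤ (star (n-1) (r-1)).card := by
          refine IH (n-1) (by omega) (r-1) _ (by omega) (by omega) (image_sub_uniformOn hsub)
            (closed_image hsub hcl) (intersecting_image hr (by omega) hsub hcl hint)
        omega

lemma main_lemma : ∀ n r (𝒜 : Finset (Finset ℕ)) (X : Finset ℕ), 1 ≤ r → 2 * r ≤ n →
    𝒜 ⊆ uniformOn n r →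
    (∀ i j, 1 ≤ i → i < j → ∀ A ∈ 𝒜, comp i j A ∈ 𝒜) → IsIntersecting 𝒜 →
    X ⊆ Icc 2 n → r < X.card →
    (hitting 𝒜 X).card ≤ (hitting (star n r) X).card := by
  intro n
  induction n using Nat.strong_induction_on with
  | _ n IH =>
    intro r 𝒜 X hr hn hsub hcl hint hX hXc
    rcases eq_or_lt_of_le hr with h1 | h1
    · -- r = 1 : every member of 𝒜 is {1}, which misses X
      rw [← h1] at hsub
      have hempty : hitting 𝒜 X = ∅ := by
        rw [eq_empty_iff_forall_notMem]
        intro A hA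
        obtain ⟨hAF, ⟨x, hx⟩⟩ := mem_hitting.1 hA
        obtain ⟨hx1, hx2⟩ := mem_inter.1 hx
        have hA1 := r_one_sub hsub hcl hint hAF
        rw [mem_singleton] at hA1
        subst hA1
        rw [mem_singleton] at hx1
        have := mem_Icc.1 (hX hx2)
        omega
      rw [hempty, card_empty]
      exact Nat.zero_le _
    · have hr2 : 2 ≤ r := h1
      rcases eq_or_lt_of_le hn with h2 | h2
      · subst h2
        exact base_case hr2 hsub hint hX hXc
      · -- n > 2r
        have hn1 : 1 ≤ n := by omega
        have keyA : ∀ Y : Finset ℕ, Y ⊆ Icc 2 (n - 1) → r < Y.card →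
            (hitting 𝒜 Y).card ≤ (hitting (star n r) Y).card := by
          intro Y hY hYc
          have hnY : n ∉ Y := fun h => by have := mem_Icc.1 (hY h); omega
          rw [hitting_split 𝒜 Y n hnY, hitting_split (star n r) Y n hnY,
            star_filter_not_mem hn1, star_filter_mem_image (by omega) (by omega)]
          have hYn : Y ⊆ Icc 2 (n - 1) := hY
          have hb1 := IH (n - 1) (by omega) r (𝒜.filter (fun A => n ∉ A)) Y hr (by omega)
            (filter_sub_uniformOn hn1 hsub) (closed_filter hsub hcl)
            (intersecting_filter hint) hYn hYc
          have hb2 := IH (n - 1) (by omega) (r - 1)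
            ((𝒜.filter (fun A => n ∈ A)).image (fun A => A.erase n)) Y (by omega) (by omega)
            (image_sub_uniformOn hsub) (closed_image hsub hcl)
            (intersecting_image hr (by omega) hsub hcl hint) hYn (by omega)
          omega
        by_cases hnX : n ∈ X
        · by_cases hXall : X = Icc 2 n
          · subst hXall
            have hstarsub : star n r ⊆ uniformOn n r := filter_subset _ _
            rw [hitting_eq_self hr2 hsub, hitting_eq_self hr2 hstarsub]
            exact ekr n r 𝒜 hr hn hsub hcl hint
          · have hss : X ⊂ Icc 2 n := Finset.ssubset_iff_subset_ne.2 ⟨hX, hXall⟩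
            obtain ⟨y, hyI, hyX⟩ := exists_of_ssubset hss
            obtain ⟨hy2, hyn⟩ := mem_Icc.1 hyI
            have hyne : y ≠ n := fun h => hyX (h ▸ hnX)
            set X'' := insert y (X.erase n) with hX''def
            have hyXe : y ∉ X.erase n := fun h => hyX (mem_of_mem_erase h)
            have hnX'' : n ∉ X'' := by
              rw [hX''def]
              intro h
              rcases mem_insert.1 h with h | h
              · exact hyne h.symm
              · exact absurd rfl (mem_erase.1 h).1
            have hyX'' : y ∈ X'' := mem_insert_self _ _
            have h1 : (hitting 𝒜 X).card ≤ (hitting 𝒜 X'').card := by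
              have hXeq : insert n (X''.erase y) = X := by
                rw [hX''def, erase_insert hyXe, insert_erase hnX]
              have hswap := hitting_swap_le 𝒜 X'' y n hyX'' hnX''
                (fun A hA hnA hyA => by
                  have hc := hcl y n (by omega) (by omega) A hA
                  rwa [comp_of_cond hnA hyA] at hc)
              rwa [hXeq] at hswap
            have hX''sub : X'' ⊆ Icc 2 (n - 1) := by
              intro a ha
              rcases mem_insert.1 ha with h | h
              · rw [h, mem_Icc]; omega
              · obtain ⟨hane, haX⟩ := mem_erase.1 h
                have := mem_Icc.1 (hX haX)
                rw [mem_Icc]; omega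
            have hX''card : X''.card = X.card := by
              have hpos : 1 ≤ X.card := card_pos.2 ⟨n, hnX⟩
              rw [hX''def, card_insert_of_notMem hyXe, card_erase_of_mem hnX]
              omega
            have h2 := keyA X'' hX''sub (by omega)
            have h3 : (hitting (star n r) X'').card ≤ (hitting (star n r) X).card := by
              refine hitting_swap_le (star n r) X n y hnX hyX ?_
              intro A hA hyA hnA
              obtain ⟨hs, hc, h1m⟩ := mem_star.1 hA
              have hnAe : n ∉ A.erase y := fun h => hnA (mem_of_mem_erase h)
              refine mem_star.2 ⟨?_, ?_, ?_⟩
              · intro a ha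
                rcases mem_insert.1 ha with h | h
                · rw [h, mem_Icc]; omega
                · exact hs (mem_of_mem_erase h)
              · rw [card_insert_of_notMem hnAe, card_erase_of_mem hyA, hc]
                omega
              · exact mem_insert_of_mem (mem_erase.2 ⟨by omega, h1m⟩)
            omega
        · refine keyA X (fun a ha => ?_) hXc
          have h := mem_Icc.1 (hX ha)
          have : a ≠ n := fun h' => hnX (h' ▸ ha)
          rw [mem_Icc]; omega

theorem stmt17 (n r : ℕ) (hr : 2 ≤ r) (hn : 2 * r ≤ n) (X : Finset ℕ)
    (hX : X ⊆ Icc 2 n) (hcard : r < X.card) : IsGood n r X := by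
  intro 𝒜 hsub hLC hint
  exact main_lemma n r 𝒜 X (by omega) hn hsub
    (fun i j hi hij A hA => comp_mem_of_leftCompressed hLC hi hij hA) hint hX hcard
end
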